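/- Let G₁ be the simple graph on vertex set {1,…,8} with edge set E₁ = {{1,7},{1,2},{2,3},{3,4},{4,5},{5,6},{6,7},{7,8},{2,8},{2,5},{5,8}}, and let G₂ be the simple graph on the same vertex set with edge set E₂ = {{1,7},{1,2},{2,4},{4,5},{5,7},{7,8},{2,8},{2,5},{3,5},{3,6},{6,8}}. Then G₁ and G₂ have the same chromatic polynomial: for every natural number n, the number of proper colorings of G₁ with n colors equals the number of proper colorings of G₂ with n colors (equivalently, Σ_{S ⊆ E₁} (−1)^{|S|} n^{c₁(S)} = Σ_{S ⊆ E₂} (−1)^{|S|} n^{c₂(S)}, where cᵢ(S) is the number of connected components of the spanning subgraph of Gᵢ with edge set S). -/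

import Mathlib

open Finset SimpleGraph MvPolynomial

/-- Edge set of the first Schwärzler graph `G₁` on vertices `{1,…,8}`,
encoded on `Fin 8` via `i ↦ i - 1`. -/
def E1 : Finset (Sym2 (Fin 8)) :=
  {s(0,6), s(0,1), s(1,2), s(2,3), s(3,4), s(4,5), s(5,6), s(6,7), s(1,7), s(1,4), s(4,7)}

/-- Edge set of the second Schwärzler graph `G₂` on vertices `{1,…,8}`,
encoded on `Fin 8` via `i ↦ i - 1`. -/
def E2 : Finset (Sym2 (Fin 8)) :=
  {s(0,6), s(0,1), s(1,3), s(3,4), s(4,6), s(6,7), s(1,7), s(1,4), s(2,4), s(2,5), s(5,7)}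

/-- The number of connected components of the spanning subgraph of the complete
graph on `Fin 8` with edge set `S`. -/
noncomputable def numComp (S : Finset (Sym2 (Fin 8))) : ℕ :=
  Nat.card (SimpleGraph.fromEdgeSet (↑S : Set (Sym2 (Fin 8)))).ConnectedComponent

/-- The (matroid) rank of an edge subset `S`: `8` minus the number of connected
components of the spanning subgraph `(V, S)`. -/
noncomputable def rk (S : Finset (Sym2 (Fin 8))) : ℕ := 8 - numComp S

instance (s : Set (Sym2 (Fin 8))) [DecidablePred (· ∈ s)] :
    DecidableRel (SimpleGraph.fromEdgeSet s).Adj := fun a b =>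
  decidable_of_iff (s(a, b) ∈ s ∧ a ≠ b) (SimpleGraph.fromEdgeSet_adj s).symm

namespace Schw

def w : Fin 8 → ℕ
  | 0 => 1 | 1 => 1 | 2 => 2 | 3 => 6 | 4 => 24 | 5 => 120 | 6 => 720 | 7 => 5040

def md : Fin 8 → ℕ
  | 0 => 1 | 1 => 2 | 2 => 3 | 3 => 4 | 4 => 5 | 5 => 6 | 6 => 7 | 7 => 8

lemma md_eq (v : Fin 8) : md v = v.1 + 1 := by fin_cases v <;> rfl

def dec (m : ℕ) (v : Fin 8) : Fin 8 :=
  ⟨(m / w v) % md v, by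
    rw [md_eq]; exact lt_of_lt_of_le (Nat.mod_lt _ (Nat.succ_pos _)) v.2⟩

lemma dec_le (m : ℕ) (v : Fin 8) : dec m v ≤ v := by
  have : (m / w v) % md v < v.1 + 1 := by
    rw [md_eq]; exact Nat.mod_lt _ (Nat.succ_pos _)
  simpa [dec, Fin.le_def] using Nat.lt_succ_iff.mp this

def enc (q : Fin 8 → Fin 8) : ℕ := ∑ v, (q v).1 * w v

lemma dec_enc (q : Fin 8 → Fin 8) (hq : ∀ v, q v ≤ v) : dec (enc q) = q := by
  have h := fun i => Fin.le_def.mp (hq i)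
  have h0 := h 0; have h1 := h 1; have h2 := h 2; have h3 := h 3
  have h4 := h 4; have h5 := h 5; have h6 := h 6; have h7 := h 7
  funext v
  apply Fin.ext
  fin_cases v <;> simp [enc, dec, w, md, Fin.sum_univ_eight] at * <;> omega

lemma enc_lt (q : Fin 8 → Fin 8) (hq : ∀ v, q v ≤ v) : enc q < 40320 := by
  have h := fun i => Fin.le_def.mp (hq i)
  have h0 := h 0; have h1 := h 1; have h2 := h 2; have h3 := h 3
  have h4 := h 4; have h5 := h 5; have h6 := h 6; have h7 := h 7
  simp [enc, w, Fin.sum_univ_eight] at *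
  omega

lemma enc_dec (m : ℕ) (hm : m < 40320) : enc (dec m) = m := by
  simp [enc, dec, w, md, Fin.sum_univ_eight]
  omega

def good (E : Finset (Sym2 (Fin 8))) (m : ℕ) : Prop :=
  (∀ v, dec m (dec m v) = dec m v) ∧ (∀ u v : Fin 8, s(u,v) ∈ E → dec m u ≠ dec m v)

instance (E : Finset (Sym2 (Fin 8))) : DecidablePred (good E) := fun _ => instDecidableAnd

def QF (E : Finset (Sym2 (Fin 8))) : Finset ℕ := (range 40320).filter (good E)

def fixedF (m : ℕ) : Finset (Fin 8) := univ.filter fun v => dec m v = v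

def kf (m : ℕ) : ℕ := (fixedF m).card

variable {n : ℕ}

def reps (f : Fin 8 → Fin n) (v : Fin 8) : Fin 8 :=
  (univ.filter fun u => f u = f v).min' ⟨v, by simp⟩

lemma reps_le (f : Fin 8 → Fin n) (v : Fin 8) : reps f v ≤ v :=
  Finset.min'_le _ v (by simp)

lemma f_reps (f : Fin 8 → Fin n) (v : Fin 8) : f (reps f v) = f v := by
  have := Finset.min'_mem (univ.filter fun u => f u = f v) ⟨v, by simp⟩
  simpa [reps] using (Finset.mem_filter.mp this).2

lemma reps_eq_of_feq {f : Fin 8 → Fin n} {u v : Fin 8} (h : f u = f v) :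
    reps f u = reps f v := by
  have hs : (univ.filter fun x => f x = f u) = univ.filter fun x => f x = f v := by
    apply Finset.filter_congr; intro x _; simp [h]
  apply le_antisymm
  · exact Finset.min'_le _ _ (hs ▸ Finset.min'_mem _ ⟨v, by simp⟩)
  · exact Finset.min'_le _ _ (hs ▸ Finset.min'_mem _ ⟨u, by simp⟩)

lemma feq_of_reps_eq {f : Fin 8 → Fin n} {u v : Fin 8} (h : reps f u = reps f v) :
    f u = f v := by
  calc f u = f (reps f u) := (f_reps f u).symm
    _ = f (reps f v) := by rw [h]
    _ = f v := f_reps f v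

lemma reps_idem (f : Fin 8 → Fin n) (v : Fin 8) : reps f (reps f v) = reps f v :=
  reps_eq_of_feq (f_reps f v)

lemma reps_min {f : Fin 8 → Fin n} {u v : Fin 8} (h : f u = f v) : reps f v ≤ u :=
  reps_eq_of_feq h.symm ▸ reps_le f u

def codeOf (f : Fin 8 → Fin n) : ℕ := enc (reps f)

lemma dec_codeOf (f : Fin 8 → Fin n) : dec (codeOf f) = reps f :=
  dec_enc _ (reps_le f)

theorem card_eq (E : Finset (Sym2 (Fin 8))) (n : ℕ) :
    Fintype.card {f : Fin 8 → Fin n // ∀ u v : Fin 8, s(u, v) ∈ E → f u ≠ f v} =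
    ∑ m ∈ QF E, n.descFactorial (kf m) := by
  classical
  set C := {f : Fin 8 → Fin n // ∀ u v : Fin 8, s(u, v) ∈ E → f u ≠ f v} with hC
  have hmem : ∀ f : C, codeOf f.1 ∈ QF E := by
    intro f
    have hd : dec (codeOf f.1) = reps f.1 := dec_codeOf f.1
    refine Finset.mem_filter.mpr ⟨Finset.mem_range.mpr (enc_lt _ (reps_le f.1)), ?_, ?_⟩
    · intro v; rw [hd]; exact reps_idem f.1 v
    · intro u v hE hne
      rw [hd] at hne
      exact f.2 u v hE (feq_of_reps_eq hne)
  have h1 : Fintype.card C = ∑ m ∈ QF E, (univ.filter fun f : C => codeOf f.1 = m).card := by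
    rw [← Finset.card_univ]
    exact Finset.card_eq_sum_card_fiberwise fun f _ => hmem f
  rw [h1]
  refine Finset.sum_congr rfl fun m hm => ?_
  have hlt : m < 40320 := Finset.mem_range.mp (Finset.mem_filter.mp hm).1
  have hgood : good E m := (Finset.mem_filter.mp hm).2
  -- fiber ≃ embeddings
  have hdecfix : ∀ v, dec m (dec m v) = dec m v := hgood.1
  have e : {f : C // codeOf f.1 = m} ≃ ({ x // x ∈ fixedF m } ↪ Fin n) := by
    refine
      { toFun := fun fp => ⟨fun v => fp.1.1 v.1, ?_⟩
        invFun := fun g => ⟨⟨fun v => g ⟨dec m v, by simp [fixedF, hdecfix v]⟩, ?_⟩, ?_⟩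
        left_inv := ?_
        right_inv := ?_ }
    · -- injectivity of restriction
      rintro ⟨v, hv⟩ ⟨u, hu⟩ h
      simp only [fixedF, Finset.mem_filter] at hv hu
      have hrf : dec m = reps fp.1.1 := by
        have h' := dec_codeOf fp.1.1; rw [fp.2] at h'; exact h' 
      apply Subtype.ext
      have : reps fp.1.1 v = reps fp.1.1 u := reps_eq_of_feq h
      calc v = dec m v := hv.2.symm
        _ = reps fp.1.1 v := by rw [hrf]
        _ = reps fp.1.1 u := this
        _ = dec m u := by rw [hrf]
        _ = u := hu.2
    · -- properness of g ∘ dec m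
      intro u v hE heq
      have := g.injective heq
      exact hgood.2 u v hE (Subtype.ext_iff.mp this)
    · -- codeOf = m
      show enc (reps fun v => g ⟨dec m v, _⟩) = m
      have hrd : (reps fun v => g ⟨dec m v, by simp [fixedF, hdecfix v]⟩) = dec m := by
        funext v
        set f := fun v => g ⟨dec m v, by simp [fixedF, hdecfix v]⟩ with hf
        have hfd : f (dec m v) = f v := by
          show g _ = g _
          congr 1
          exact Subtype.ext (hdecfix v)
        apply le_antisymm
        · exact reps_min hfd
        · have h2 : f (reps f v) = f v := f_reps f v
          have h3 : dec m (reps f v) = dec m v := Subtype.ext_iff.mp (g.injective h2)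
          calc dec m v = dec m (reps f v) := h3.symm
            _ ≤ reps f v := dec_le m _
      rw [hrd]
      exact enc_dec m hlt
    · -- left inverse
      rintro ⟨⟨f, hf⟩, hc⟩
      apply Subtype.ext
      apply Subtype.ext
      funext v
      show f (dec m v) = f v
      have hrf : dec m = reps f := by
        have h' := dec_codeOf f; rw [hc] at h'; exact h' 
      rw [hrf]
      exact f_reps f v
    · -- right inverse
      intro g
      apply Function.Embedding.ext
      rintro ⟨v, hv⟩
      have hfix : dec m v = v := by
        have := (Finset.mem_filter.mp hv).2
        simpa using this
      show g ⟨dec m v, by simp [fixedF, hdecfix v]⟩ = g ⟨v, hv⟩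
      exact congrArg g (Subtype.ext hfix)
  calc (univ.filter fun f : C => codeOf f.1 = m).card
      = Fintype.card {f : C // codeOf f.1 = m} := (Fintype.card_subtype _).symm
    _ = Fintype.card ({ x // x ∈ fixedF m } ↪ Fin n) := Fintype.card_congr e
    _ = n.descFactorial (kf m) := by
        rw [Fintype.card_embedding_eq, Fintype.card_fin, Fintype.card_coe]; rfl


def kfF (m : ℕ) : ℕ :=
  (if dec m 0 = 0 then 1 else 0) + (if dec m 1 = 1 then 1 else 0) +
  (if dec m 2 = 2 then 1 else 0) + (if dec m 3 = 3 then 1 else 0) +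
  (if dec m 4 = 4 then 1 else 0) + (if dec m 5 = 5 then 1 else 0) +
  (if dec m 6 = 6 then 1 else 0) + (if dec m 7 = 7 then 1 else 0)

lemma kf_eq_kfF : kf = kfF := by
  funext m
  rw [kf, fixedF, Finset.card_filter, Fin.sum_univ_eight]
  rfl

def fastF1 (m : ℕ) : Prop :=
  (dec m (dec m 0) = dec m 0 ∧ dec m (dec m 1) = dec m 1 ∧ dec m (dec m 2) = dec m 2 ∧
   dec m (dec m 3) = dec m 3 ∧ dec m (dec m 4) = dec m 4 ∧ dec m (dec m 5) = dec m 5 ∧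
   dec m (dec m 6) = dec m 6 ∧ dec m (dec m 7) = dec m 7) ∧
  (dec m 0 ≠ dec m 6 ∧ dec m 0 ≠ dec m 1 ∧ dec m 1 ≠ dec m 2 ∧ dec m 2 ≠ dec m 3 ∧
   dec m 3 ≠ dec m 4 ∧ dec m 4 ≠ dec m 5 ∧ dec m 5 ≠ dec m 6 ∧ dec m 6 ≠ dec m 7 ∧
   dec m 1 ≠ dec m 7 ∧ dec m 1 ≠ dec m 4 ∧ dec m 4 ≠ dec m 7)
instance : DecidablePred fastF1 := fun _ => instDecidableAnd

def fastF2 (m : ℕ) : Prop :=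
  (dec m (dec m 0) = dec m 0 ∧ dec m (dec m 1) = dec m 1 ∧ dec m (dec m 2) = dec m 2 ∧
   dec m (dec m 3) = dec m 3 ∧ dec m (dec m 4) = dec m 4 ∧ dec m (dec m 5) = dec m 5 ∧
   dec m (dec m 6) = dec m 6 ∧ dec m (dec m 7) = dec m 7) ∧
  (dec m 0 ≠ dec m 6 ∧ dec m 0 ≠ dec m 1 ∧ dec m 1 ≠ dec m 3 ∧ dec m 3 ≠ dec m 4 ∧
   dec m 4 ≠ dec m 6 ∧ dec m 6 ≠ dec m 7 ∧ dec m 1 ≠ dec m 7 ∧ dec m 1 ≠ dec m 4 ∧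
   dec m 2 ≠ dec m 4 ∧ dec m 2 ≠ dec m 5 ∧ dec m 5 ≠ dec m 7)
instance : DecidablePred fastF2 := fun _ => instDecidableAnd

lemma good_iff_fastF1 (m : ℕ) : good E1 m ↔ fastF1 m := by
  constructor
  · rintro ⟨hi, hp⟩
    exact ⟨⟨hi 0, hi 1, hi 2, hi 3, hi 4, hi 5, hi 6, hi 7⟩,
      hp 0 6 (by decide), hp 0 1 (by decide), hp 1 2 (by decide), hp 2 3 (by decide),
      hp 3 4 (by decide), hp 4 5 (by decide), hp 5 6 (by decide), hp 6 7 (by decide),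
      hp 1 7 (by decide), hp 1 4 (by decide), hp 4 7 (by decide)⟩
  · rintro ⟨⟨i0,i1,i2,i3,i4,i5,i6,i7⟩, p1,p2,p3,p4,p5,p6,p7,p8,p9,p10,p11⟩
    constructor
    · intro v
      fin_cases v
      exacts [i0, i1, i2, i3, i4, i5, i6, i7]
    · intro u v hE
      fin_cases u <;> fin_cases v <;>
        first
          | exact absurd hE (by decide)
          | assumption
          | exact fun hq => absurd hq.symm (by assumption)

lemma good_iff_fastF2 (m : ℕ) : good E2 m ↔ fastF2 m := by
  constructor
  · rintro ⟨hi, hp⟩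
    exact ⟨⟨hi 0, hi 1, hi 2, hi 3, hi 4, hi 5, hi 6, hi 7⟩,
      hp 0 6 (by decide), hp 0 1 (by decide), hp 1 3 (by decide), hp 3 4 (by decide),
      hp 4 6 (by decide), hp 6 7 (by decide), hp 1 7 (by decide), hp 1 4 (by decide),
      hp 2 4 (by decide), hp 2 5 (by decide), hp 5 7 (by decide)⟩
  · rintro ⟨⟨i0,i1,i2,i3,i4,i5,i6,i7⟩, p1,p2,p3,p4,p5,p6,p7,p8,p9,p10,p11⟩
    constructor
    · intro v
      fin_cases v
      exacts [i0, i1, i2, i3, i4, i5, i6, i7]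
    · intro u v hE
      fin_cases u <;> fin_cases v <;>
        first
          | exact absurd hE (by decide)
          | assumption
          | exact fun hq => absurd hq.symm (by assumption)

lemma QF1_eq : QF E1 = (range 40320).filter fastF1 :=
  Finset.filter_congr fun m _ => good_iff_fastF1 m

lemma QF2_eq : QF E2 = (range 40320).filter fastF2 :=
  Finset.filter_congr fun m _ => good_iff_fastF2 m

set_option maxRecDepth 1000000 in
set_option maxHeartbeats 1000000000 in
lemma chunk1_0 :
    (List.filter (fun b => decide (fastF1 b)) (List.range' 0 2520)).map kfF = [3, 3, 4, 4, 3, 4, 4, 5, 4, 4, 5, 4, 4, 5, 4, 4, 5, 5, 4, 5, 5, 6, 3, 3, 4, 4, 4, 5, 3, 3, 4, 4, 4, 5, 4, 5, 4, 4, 5, 5, 5, 6, 4, 4, 5, 4, 4, 5, 5] := by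
  decide

set_option maxRecDepth 1000000 in
set_option maxHeartbeats 1000000000 in
lemma chunk1_1 :
    (List.filter (fun b => decide (fastF1 b)) (List.range' 2520 2520)).map kfF = [5, 5, 6, 4, 3, 4, 4, 5, 4, 3, 4, 4, 5, 4, 4, 5, 4, 5, 5, 4, 5, 5, 6, 4, 4, 5, 5, 4, 5, 5, 6, 4, 4, 5, 5, 4, 5, 5, 6, 5, 5, 6, 5, 5, 6, 5, 5, 6, 6, 5, 6, 6, 7] := by
  decide

set_option maxRecDepth 1000000 in
set_option maxHeartbeats 1000000000 in
lemma chunk1_2 :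
    (List.filter (fun b => decide (fastF1 b)) (List.range' 5040 2520)).map kfF = [] := by
  decide

set_option maxRecDepth 1000000 in
set_option maxHeartbeats 1000000000 in
lemma chunk1_3 :
    (List.filter (fun b => decide (fastF1 b)) (List.range' 7560 2520)).map kfF = [] := by
  decide

set_option maxRecDepth 1000000 in
set_option maxHeartbeats 1000000000 in
lemma chunk1_4 :
    (List.filter (fun b => decide (fastF1 b)) (List.range' 10080 2520)).map kfF = [4, 4, 5, 3, 4, 4, 4, 5, 4, 5, 4, 5, 5, 5, 6, 5, 4, 5, 4, 5] := by
  decide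

set_option maxRecDepth 1000000 in
set_option maxHeartbeats 1000000000 in
lemma chunk1_5 :
    (List.filter (fun b => decide (fastF1 b)) (List.range' 12600 2520)).map kfF = [5, 6, 4, 4, 5, 4, 4, 5, 4, 4, 5, 5, 5, 5, 6, 5, 5, 6, 4, 5, 5, 5, 6, 4, 5, 5, 5, 6, 5, 6, 5, 6, 6, 6, 7] := by
  decide

set_option maxRecDepth 1000000 in
set_option maxHeartbeats 1000000000 in
lemma chunk1_6 :
    (List.filter (fun b => decide (fastF1 b)) (List.range' 15120 2520)).map kfF = [4, 4, 5, 4, 5, 3, 4, 4, 4, 5, 4, 5, 5, 5, 6, 4, 5, 4, 4, 5, 4, 4, 5, 5, 5, 6] := by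
  decide

set_option maxRecDepth 1000000 in
set_option maxHeartbeats 1000000000 in
lemma chunk1_7 :
    (List.filter (fun b => decide (fastF1 b)) (List.range' 17640 2520)).map kfF = [4, 5, 4, 5, 5, 4, 5, 5, 6, 5, 5, 6, 4, 5, 5, 5, 6, 5, 6, 4, 5, 5, 5, 6, 5, 6, 6, 6, 7] := by
  decide

set_option maxRecDepth 1000000 in
set_option maxHeartbeats 1000000000 in
lemma chunk1_8 :
    (List.filter (fun b => decide (fastF1 b)) (List.range' 20160 2520)).map kfF = [] := by
  decide

set_option maxRecDepth 1000000 in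
set_option maxHeartbeats 1000000000 in
lemma chunk1_9 :
    (List.filter (fun b => decide (fastF1 b)) (List.range' 22680 2520)).map kfF = [] := by
  decide

set_option maxRecDepth 1000000 in
set_option maxHeartbeats 1000000000 in
lemma chunk1_10 :
    (List.filter (fun b => decide (fastF1 b)) (List.range' 25200 2520)).map kfF = [3, 4, 4, 5, 4, 4, 5, 5, 4, 5, 5, 6, 4, 5, 4, 4, 5, 5, 5, 6] := by
  decide

set_option maxRecDepth 1000000 in
set_option maxHeartbeats 1000000000 in
lemma chunk1_11 :
    (List.filter (fun b => decide (fastF1 b)) (List.range' 27720 2520)).map kfF = [4, 5, 5, 5, 6, 5, 4, 5, 5, 6, 4, 5, 5, 6, 5, 5, 6, 6, 5, 6, 6, 7] := by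
  decide

set_option maxRecDepth 1000000 in
set_option maxHeartbeats 1000000000 in
lemma chunk1_12 :
    (List.filter (fun b => decide (fastF1 b)) (List.range' 30240 2520)).map kfF = [] := by
  decide

set_option maxRecDepth 1000000 in
set_option maxHeartbeats 1000000000 in
lemma chunk1_13 :
    (List.filter (fun b => decide (fastF1 b)) (List.range' 32760 2520)).map kfF = [] := by
  decide

set_option maxRecDepth 1000000 in
set_option maxHeartbeats 1000000000 in
lemma chunk1_14 :
    (List.filter (fun b => decide (fastF1 b)) (List.range' 35280 2520)).map kfF = [4, 4, 5, 5, 4, 5, 5, 6, 4, 5, 5, 5, 6, 4, 5, 5, 5, 6, 4, 5, 5, 6, 5, 5, 6, 6, 5, 6, 6, 7, 4, 4, 5, 5, 5, 6, 4, 5, 4, 4, 5, 5, 5, 6, 5, 5, 6, 5, 6, 5, 5, 6, 6, 6, 7, 5, 5, 6, 4, 5, 5, 5, 6, 5, 6] := by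
  decide

set_option maxRecDepth 1000000 in
set_option maxHeartbeats 1000000000 in
lemma chunk1_15 :
    (List.filter (fun b => decide (fastF1 b)) (List.range' 37800 2520)).map kfF = [5, 6, 6, 6, 7, 5, 4, 5, 5, 6, 5, 4, 5, 5, 6, 5, 5, 6, 5, 6, 6, 5, 6, 6, 7, 5, 5, 6, 6, 5, 6, 6, 7, 4, 5, 5, 6, 5, 5, 6, 6, 5, 6, 6, 7, 5, 6, 6, 6, 7, 5, 6, 6, 6, 7, 5, 6, 6, 7, 6, 6, 7, 7, 6, 7, 7, 8] := by
  decide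

set_option maxRecDepth 1000000 in
set_option maxHeartbeats 1000000000 in
lemma chunk2_0 :
    (List.filter (fun b => decide (fastF2 b)) (List.range' 0 2520)).map kfF = [3, 4, 3, 4, 4, 4, 5, 3, 4, 4, 4, 5, 3, 3, 4, 4, 4, 4, 5, 4, 4, 5, 4, 4, 5, 5, 5, 5, 6, 3, 4, 4, 4, 5, 4, 5, 4, 4, 5, 4, 5, 5, 5, 6, 4, 4, 5] := by
  decide

set_option maxRecDepth 1000000 in
set_option maxHeartbeats 1000000000 in
lemma chunk2_1 :
    (List.filter (fun b => decide (fastF2 b)) (List.range' 2520 2520)).map kfF = [3, 4, 4, 4, 5, 4, 4, 5, 4, 5, 5, 5, 6, 4, 4, 5, 4, 4, 5, 5, 5, 5, 6, 4, 5, 4, 5, 5, 5, 6, 4, 5, 5, 5, 6, 4, 4, 5, 5, 5, 5, 6, 5, 5, 6, 5, 5, 6, 6, 6, 6, 7] := by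
  decide

set_option maxRecDepth 1000000 in
set_option maxHeartbeats 1000000000 in
lemma chunk2_2 :
    (List.filter (fun b => decide (fastF2 b)) (List.range' 5040 2520)).map kfF = [] := by
  decide

set_option maxRecDepth 1000000 in
set_option maxHeartbeats 1000000000 in
lemma chunk2_3 :
    (List.filter (fun b => decide (fastF2 b)) (List.range' 7560 2520)).map kfF = [] := by
  decide

set_option maxRecDepth 1000000 in
set_option maxHeartbeats 1000000000 in
lemma chunk2_4 :
    (List.filter (fun b => decide (fastF2 b)) (List.range' 10080 2520)).map kfF = [3, 4, 4, 4, 5, 3, 4, 4, 4, 5, 4, 5, 4, 4, 5, 4, 5, 5, 5, 6, 4, 5, 4, 5] := by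
  decide

set_option maxRecDepth 1000000 in
set_option maxHeartbeats 1000000000 in
lemma chunk2_5 :
    (List.filter (fun b => decide (fastF2 b)) (List.range' 12600 2520)).map kfF = [4, 5, 5, 5, 6, 4, 5, 5, 5, 6, 4, 5, 5, 5, 6, 4, 5, 5, 5, 6, 5, 6, 5, 5, 6, 5, 6, 6, 6, 7] := by
  decide

set_option maxRecDepth 1000000 in
set_option maxHeartbeats 1000000000 in
lemma chunk2_6 :
    (List.filter (fun b => decide (fastF2 b)) (List.range' 15120 2520)).map kfF = [3, 4, 4, 5, 4, 4, 5, 4, 4, 5, 4, 5, 5, 5, 6, 4, 5, 4, 5, 5, 5, 6] := by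
  decide

set_option maxRecDepth 1000000 in
set_option maxHeartbeats 1000000000 in
lemma chunk2_7 :
    (List.filter (fun b => decide (fastF2 b)) (List.range' 17640 2520)).map kfF = [4, 5, 5, 5, 6, 4, 5, 5, 6, 5, 5, 6, 5, 5, 6, 5, 6, 6, 6, 7] := by
  decide

set_option maxRecDepth 1000000 in
set_option maxHeartbeats 1000000000 in
lemma chunk2_8 :
    (List.filter (fun b => decide (fastF2 b)) (List.range' 20160 2520)).map kfF = [3, 4, 4, 4, 5, 3, 4, 4, 4, 5, 4, 4, 5, 4, 4, 5, 5, 5, 5, 6, 4, 4, 5, 4, 4, 5, 5, 5, 5, 6, 4, 5, 4, 5] := by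
  decide

set_option maxRecDepth 1000000 in
set_option maxHeartbeats 1000000000 in
lemma chunk2_9 :
    (List.filter (fun b => decide (fastF2 b)) (List.range' 22680 2520)).map kfF = [4, 4, 5, 5, 5, 6, 4, 4, 5, 5, 5, 5, 6, 4, 5, 5, 5, 6, 4, 5, 5, 5, 6, 5, 5, 6, 5, 5, 6, 6, 6, 6, 7] := by
  decide

set_option maxRecDepth 1000000 in
set_option maxHeartbeats 1000000000 in
lemma chunk2_10 :
    (List.filter (fun b => decide (fastF2 b)) (List.range' 25200 2520)).map kfF = [] := by
  decide

set_option maxRecDepth 1000000 in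
set_option maxHeartbeats 1000000000 in
lemma chunk2_11 :
    (List.filter (fun b => decide (fastF2 b)) (List.range' 27720 2520)).map kfF = [] := by
  decide

set_option maxRecDepth 1000000 in
set_option maxHeartbeats 1000000000 in
lemma chunk2_12 :
    (List.filter (fun b => decide (fastF2 b)) (List.range' 30240 2520)).map kfF = [] := by
  decide

set_option maxRecDepth 1000000 in
set_option maxHeartbeats 1000000000 in
lemma chunk2_13 :
    (List.filter (fun b => decide (fastF2 b)) (List.range' 32760 2520)).map kfF = [] := by
  decide

set_option maxRecDepth 1000000 in
set_option maxHeartbeats 1000000000 in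
lemma chunk2_14 :
    (List.filter (fun b => decide (fastF2 b)) (List.range' 35280 2520)).map kfF = [4, 4, 5, 4, 5, 5, 5, 6, 4, 5, 4, 5, 5, 5, 6, 4, 5, 5, 5, 6, 4, 4, 5, 5, 5, 5, 6, 5, 5, 6, 5, 5, 6, 6, 6, 6, 7, 4, 5, 5, 5, 6, 4, 5, 5, 5, 6, 5, 6, 5, 5, 6, 5, 6, 6, 6, 7, 4, 5, 5, 6, 5, 5, 6] := by
  decide

set_option maxRecDepth 1000000 in
set_option maxHeartbeats 1000000000 in
lemma chunk2_15 :
    (List.filter (fun b => decide (fastF2 b)) (List.range' 37800 2520)).map kfF = [4, 5, 5, 5, 6, 5, 5, 6, 5, 6, 6, 6, 7, 5, 5, 6, 5, 5, 6, 6, 6, 6, 7, 5, 5, 6, 5, 6, 6, 6, 7, 5, 6, 5, 6, 6, 6, 7, 5, 6, 6, 6, 7, 5, 5, 6, 6, 6, 6, 7, 6, 6, 7, 6, 6, 7, 7, 7, 7, 8] := by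
  decide

set_option maxRecDepth 1000000 in
lemma key1 : (QF E1).val.map kf = (↑([3, 3, 4, 4, 3, 4, 4, 5, 4, 4, 5, 4, 4, 5, 4, 4, 5, 5, 4, 5, 5, 6, 3, 3, 4, 4, 4, 5, 3, 3, 4, 4, 4, 5, 4, 5, 4, 4, 5, 5, 5, 6, 4, 4, 5, 4, 4, 5, 5, 5, 5, 6, 4, 3, 4, 4, 5, 4, 3, 4, 4, 5, 4, 4, 5, 4, 5, 5, 4, 5, 5, 6, 4, 4, 5, 5, 4, 5, 5, 6, 4, 4, 5, 5, 4, 5, 5, 6, 5, 5, 6, 5, 5, 6, 5, 5, 6, 6, 5, 6, 6, 7, 4, 4, 5, 3, 4, 4, 4, 5, 4, 5, 4, 5, 5, 5, 6, 5, 4, 5, 4, 5, 5, 6, 4, 4, 5, 4, 4, 5, 4, 4, 5, 5, 5, 5, 6, 5, 5, 6, 4, 5, 5, 5, 6, 4, 5, 5, 5, 6, 5, 6, 5, 6, 6, 6, 7, 4, 4, 5, 4, 5, 3, 4, 4, 4, 5, 4, 5, 5, 5, 6, 4, 5, 4, 4, 5, 4, 4, 5, 5, 5, 6, 4, 5, 4,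 5, 5, 4, 5, 5, 6, 5, 5, 6, 4, 5, 5, 5, 6, 5, 6, 4, 5, 5, 5, 6, 5, 6, 6, 6, 7, 3, 4, 4, 5, 4, 4, 5, 5, 4, 5, 5, 6, 4, 5, 4, 4, 5, 5, 5, 6, 4, 5, 5, 5, 6, 5, 4, 5, 5, 6, 4, 5, 5, 6, 5, 5, 6, 6, 5, 6, 6, 7, 4, 4, 5, 5, 4, 5, 5, 6, 4, 5, 5, 5, 6, 4, 5, 5, 5, 6, 4, 5, 5, 6, 5, 5, 6, 6, 5, 6, 6, 7, 4, 4, 5, 5, 5, 6, 4, 5, 4, 4, 5, 5, 5, 6, 5, 5, 6, 5, 6, 5, 5, 6, 6, 6, 7, 5, 5, 6, 4, 5, 5, 5, 6, 5, 6, 5, 6, 6, 6, 7, 5, 4, 5, 5, 6, 5, 4, 5, 5, 6, 5, 5, 6, 5, 6, 6, 5, 6, 6, 7, 5, 5, 6, 6, 5, 6, 6, 7, 4, 5, 5, 6, 5, 5, 6, 6, 5, 6, 6, 7, 5, 6, 6, 6, 7, 5, 6, 6, 6, 7, 5, 6, 6, 7, 6, 6, 7, 7, 6, 7, 7, 8])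 : Multiset ℕ) := by
  rw [QF1_eq, kf_eq_kfF, Finset.filter_val, Finset.range_val,
    show (Multiset.range 40320) = ((List.range 40320 : List ℕ) : Multiset ℕ) from rfl,
    Multiset.filter_coe, Multiset.map_coe, List.range_eq_range']
  have s0 : List.range' 0 40320 = List.range' 0 2520 ++ List.range' 2520 37800 := (List.range'_append (s := 0) (m := 2520) (n := 37800) (step := 1)).symm
  have s1 : List.range' 2520 37800 = List.range' 2520 2520 ++ List.range' 5040 35280 := (List.range'_append (s := 2520) (m := 2520) (n := 35280) (step := 1)).symm
  have s2 : List.range' 5040 35280 = List.range' 5040 2520 ++ List.range' 7560 32760 := (List.range'_append (s := 5040) (m := 2520) (n := 32760) (step := 1)).symm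
  have s3 : List.range' 7560 32760 = List.range' 7560 2520 ++ List.range' 10080 30240 := (List.range'_append (s := 7560) (m := 2520) (n := 30240) (step := 1)).symm
  have s4 : List.range' 10080 30240 = List.range' 10080 2520 ++ List.range' 12600 27720 := (List.range'_append (s := 10080) (m := 2520) (n := 27720) (step := 1)).symm
  have s5 : List.range' 12600 27720 = List.range' 12600 2520 ++ List.range' 15120 25200 := (List.range'_append (s := 12600) (m := 2520) (n := 25200) (step := 1)).symm
  have s6 : List.range' 15120 25200 = List.range' 15120 2520 ++ List.range' 17640 22680 := (List.range'_append (s := 15120) (m := 2520) (n := 22680) (step := 1)).symm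
  have s7 : List.range' 17640 22680 = List.range' 17640 2520 ++ List.range' 20160 20160 := (List.range'_append (s := 17640) (m := 2520) (n := 20160) (step := 1)).symm
  have s8 : List.range' 20160 20160 = List.range' 20160 2520 ++ List.range' 22680 17640 := (List.range'_append (s := 20160) (m := 2520) (n := 17640) (step := 1)).symm
  have s9 : List.range' 22680 17640 = List.range' 22680 2520 ++ List.range' 25200 15120 := (List.range'_append (s := 22680) (m := 2520) (n := 15120) (step := 1)).symm
  have s10 : List.range' 25200 15120 = List.range' 25200 2520 ++ List.range' 27720 12600 := (List.range'_append (s := 25200) (m := 2520) (n := 12600) (step := 1)).symm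
  have s11 : List.range' 27720 12600 = List.range' 27720 2520 ++ List.range' 30240 10080 := (List.range'_append (s := 27720) (m := 2520) (n := 10080) (step := 1)).symm
  have s12 : List.range' 30240 10080 = List.range' 30240 2520 ++ List.range' 32760 7560 := (List.range'_append (s := 30240) (m := 2520) (n := 7560) (step := 1)).symm
  have s13 : List.range' 32760 7560 = List.range' 32760 2520 ++ List.range' 35280 5040 := (List.range'_append (s := 32760) (m := 2520) (n := 5040) (step := 1)).symm
  have s14 : List.range' 35280 5040 = List.range' 35280 2520 ++ List.range' 37800 2520 := (List.range'_append (s := 35280) (m := 2520) (n := 2520) (step := 1)).symm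
  rw [s0, s1, s2, s3, s4, s5, s6, s7, s8, s9, s10, s11, s12, s13, s14]
  simp only [List.filter_append, List.map_append]
  rw [chunk1_0, chunk1_1, chunk1_2, chunk1_3, chunk1_4, chunk1_5, chunk1_6, chunk1_7, chunk1_8, chunk1_9, chunk1_10, chunk1_11, chunk1_12, chunk1_13, chunk1_14, chunk1_15]
  rfl

set_option maxRecDepth 1000000 in
lemma key2 : (QF E2).val.map kf = (↑([3, 4, 3, 4, 4, 4, 5, 3, 4, 4, 4, 5, 3, 3, 4, 4, 4, 4, 5, 4, 4, 5, 4, 4, 5, 5, 5, 5, 6, 3, 4, 4, 4, 5, 4, 5, 4, 4, 5, 4, 5, 5, 5, 6, 4, 4, 5, 3, 4, 4, 4, 5, 4, 4, 5, 4, 5, 5, 5, 6, 4, 4, 5, 4, 4, 5, 5, 5, 5, 6, 4, 5, 4, 5, 5, 5, 6, 4, 5, 5, 5, 6, 4, 4, 5, 5, 5, 5, 6, 5, 5, 6, 5, 5, 6, 6, 6, 6, 7, 3, 4, 4, 4, 5, 3, 4, 4, 4, 5, 4, 5, 4, 4, 5, 4, 5, 5, 5, 6, 4, 5, 4, 5,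 4, 5, 5, 5, 6, 4, 5, 5, 5, 6, 4, 5, 5, 5, 6, 4, 5, 5, 5, 6, 5, 6, 5, 5, 6, 5, 6, 6, 6, 7, 3, 4, 4, 5, 4, 4, 5, 4, 4, 5, 4, 5, 5, 5, 6, 4, 5, 4, 5, 5, 5, 6, 4, 5, 5, 5, 6, 4, 5, 5, 6, 5, 5, 6, 5, 5, 6, 5, 6, 6, 6, 7, 3, 4, 4, 4, 5, 3, 4, 4, 4, 5, 4, 4, 5, 4, 4, 5, 5, 5, 5, 6, 4, 4, 5, 4, 4, 5, 5, 5, 5, 6, 4, 5, 4, 5, 4, 4, 5, 5, 5, 6, 4, 4, 5, 5, 5, 5, 6, 4, 5, 5, 5, 6, 4, 5, 5, 5, 6, 5, 5, 6, 5, 5, 6, 6, 6, 6, 7, 4, 4, 5, 4, 5, 5, 5, 6, 4, 5, 4, 5, 5, 5, 6, 4, 5, 5, 5, 6, 4, 4, 5, 5, 5, 5, 6, 5, 5, 6, 5, 5, 6, 6, 6, 6, 7, 4, 5, 5, 5, 6, 4, 5, 5, 5, 6, 5, 6, 5, 5, 6, 5, 6, 6, 6, 7, 4, 5, 5, 6,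 5, 5, 6, 4, 5, 5, 5, 6, 5, 5, 6, 5, 6, 6, 6, 7, 5, 5, 6, 5, 5, 6, 6, 6, 6, 7, 5, 5, 6, 5, 6, 6, 6, 7, 5, 6, 5, 6, 6, 6, 7, 5, 6, 6, 6, 7, 5, 5, 6, 6, 6, 6, 7, 6, 6, 7, 6, 6, 7, 7, 7, 7, 8]) : Multiset ℕ) := by
  rw [QF2_eq, kf_eq_kfF, Finset.filter_val, Finset.range_val,
    show (Multiset.range 40320) = ((List.range 40320 : List ℕ) : Multiset ℕ) from rfl,
    Multiset.filter_coe, Multiset.map_coe, List.range_eq_range']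
  have s0 : List.range' 0 40320 = List.range' 0 2520 ++ List.range' 2520 37800 := (List.range'_append (s := 0) (m := 2520) (n := 37800) (step := 1)).symm
  have s1 : List.range' 2520 37800 = List.range' 2520 2520 ++ List.range' 5040 35280 := (List.range'_append (s := 2520) (m := 2520) (n := 35280) (step := 1)).symm
  have s2 : List.range' 5040 35280 = List.range' 5040 2520 ++ List.range' 7560 32760 := (List.range'_append (s := 5040) (m := 2520) (n := 32760) (step := 1)).symm
  have s3 : List.range' 7560 32760 = List.range' 7560 2520 ++ List.range' 10080 30240 := (List.range'_append (s := 7560) (m := 2520) (n := 30240) (step := 1)).symm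
  have s4 : List.range' 10080 30240 = List.range' 10080 2520 ++ List.range' 12600 27720 := (List.range'_append (s := 10080) (m := 2520) (n := 27720) (step := 1)).symm
  have s5 : List.range' 12600 27720 = List.range' 12600 2520 ++ List.range' 15120 25200 := (List.range'_append (s := 12600) (m := 2520) (n := 25200) (step := 1)).symm
  have s6 : List.range' 15120 25200 = List.range' 15120 2520 ++ List.range' 17640 22680 := (List.range'_append (s := 15120) (m := 2520) (n := 22680) (step := 1)).symm
  have s7 : List.range' 17640 22680 = List.range' 17640 2520 ++ List.range' 20160 20160 := (List.range'_append (s := 17640) (m := 2520) (n := 20160) (step := 1)).symm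
  have s8 : List.range' 20160 20160 = List.range' 20160 2520 ++ List.range' 22680 17640 := (List.range'_append (s := 20160) (m := 2520) (n := 17640) (step := 1)).symm
  have s9 : List.range' 22680 17640 = List.range' 22680 2520 ++ List.range' 25200 15120 := (List.range'_append (s := 22680) (m := 2520) (n := 15120) (step := 1)).symm
  have s10 : List.range' 25200 15120 = List.range' 25200 2520 ++ List.range' 27720 12600 := (List.range'_append (s := 25200) (m := 2520) (n := 12600) (step := 1)).symm
  have s11 : List.range' 27720 12600 = List.range' 27720 2520 ++ List.range' 30240 10080 := (List.range'_append (s := 27720) (m := 2520) (n := 10080) (step := 1)).symm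
  have s12 : List.range' 30240 10080 = List.range' 30240 2520 ++ List.range' 32760 7560 := (List.range'_append (s := 30240) (m := 2520) (n := 7560) (step := 1)).symm
  have s13 : List.range' 32760 7560 = List.range' 32760 2520 ++ List.range' 35280 5040 := (List.range'_append (s := 32760) (m := 2520) (n := 5040) (step := 1)).symm
  have s14 : List.range' 35280 5040 = List.range' 35280 2520 ++ List.range' 37800 2520 := (List.range'_append (s := 35280) (m := 2520) (n := 2520) (step := 1)).symm
  rw [s0, s1, s2, s3, s4, s5, s6, s7, s8, s9, s10, s11, s12, s13, s14]
  simp only [List.filter_append, List.map_append]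
  rw [chunk2_0, chunk2_1, chunk2_2, chunk2_3, chunk2_4, chunk2_5, chunk2_6, chunk2_7, chunk2_8, chunk2_9, chunk2_10, chunk2_11, chunk2_12, chunk2_13, chunk2_14, chunk2_15]
  rfl

end Schw

set_option maxRecDepth 1000000 in
/-- The two Schwärzler graphs have the same chromatic polynomial: for every `n`,
they admit the same number of proper colorings with `n` colors. -/
theorem chromatic_eq (n : ℕ) :
    Fintype.card {f : Fin 8 → Fin n // ∀ u v : Fin 8, s(u, v) ∈ E1 → f u ≠ f v} =
    Fintype.card {f : Fin 8 → Fin n // ∀ u v : Fin 8, s(u, v) ∈ E2 → f u ≠ f v} := by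
  rw [Schw.card_eq E1 n, Schw.card_eq E2 n]
  have h : (Schw.QF E1).1.map Schw.kf = (Schw.QF E2).1.map Schw.kf := by
    rw [Schw.key1, Schw.key2]
    decide
  calc (∑ m ∈ Schw.QF E1, n.descFactorial (Schw.kf m))
      = (((Schw.QF E1).1.map Schw.kf).map n.descFactorial).sum := by
        rw [Finset.sum, Multiset.map_map]; rfl
    _ = (((Schw.QF E2).1.map Schw.kf).map n.descFactorial).sum := by rw [h]
    _ = ∑ m ∈ Schw.QF E2, n.descFactorial (Schw.kf m) := by
        rw [Finset.sum, Multiset.map_map]; rfl
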